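/- Let $\Omega \subseteq \mathbb{R}^n$ have finite measure, let $1 \le p < q \le \infty$, and let $(f_j)$ be a sequence in $L^p(\Omega, \mathbb{R}^m)$ that is bounded in $L^p$. Then the family $(|f_j|^p)_j$ is uniformly integrable if and only if for each $\varepsilon > 0$ there exist a sequence $(g_j) \subseteq L^q(\Omega, \mathbb{R}^m)$ and a constant $c_\varepsilon > 0$ such that for all $j$, $\|f_j - g_j\|_{L^p} < \varepsilon$ and $\|g_j\|_{L^q} \le c_\varepsilon$. -/

import Mathlib

open MeasureTheory ENNReal

theorem stmt_13 (n m : ℕ) (p : ℝ) (hp : 1 ≤ p) (q : ℝ≥0∞) (hpq : ENNReal.ofReal p < q)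
    (Ω : Set (EuclideanSpace ℝ (Fin n))) (hΩ : MeasurableSet Ω) (hΩfin : volume Ω < ⊤)
    (f : ℕ → EuclideanSpace ℝ (Fin n) → EuclideanSpace ℝ (Fin m))
    (hf : ∀ j, MemLp (f j) (ENNReal.ofReal p) (volume.restrict Ω))
    (hbdd : ∃ C : ℝ≥0∞, C < ⊤ ∧ ∀ j,
      eLpNorm (f j) (ENNReal.ofReal p) (volume.restrict Ω) ≤ C) :
    (∀ ε > (0 : ℝ), ∃ t : ℝ, ∀ j,
        ∫⁻ x in Ω ∩ {x | t < ‖f j x‖}, ENNReal.ofReal (‖f j x‖ ^ p) ≤ ENNReal.ofReal ε)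
      ↔ (∀ ε > (0 : ℝ),
          ∃ (g : ℕ → EuclideanSpace ℝ (Fin n) → EuclideanSpace ℝ (Fin m)) (c : ℝ≥0∞),
            0 < c ∧ c < ⊤ ∧ ∀ j, MemLp (g j) q (volume.restrict Ω) ∧
              eLpNorm (f j - g j) (ENNReal.ofReal p) (volume.restrict Ω) <
                ENNReal.ofReal ε ∧
              eLpNorm (g j) q (volume.restrict Ω) ≤ c) := by
  classical
  obtain ⟨C, hCtop, hC⟩ := hbdd
  set μ := volume.restrict Ω with hμ
  have hp0 : (0:ℝ) < p := lt_of_lt_of_le one_pos hp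
  set P := ENNReal.ofReal p with hP
  have hP0 : P ≠ 0 := by
    simp only [hP, ne_eq, ENNReal.ofReal_eq_zero, not_le]; exact hp0
  have hPtop : P ≠ ⊤ := ENNReal.ofReal_ne_top
  have hPr : P.toReal = p := ENNReal.toReal_ofReal hp0.le
  have hP1 : 1 ≤ P := by
    rw [hP, ← ENNReal.ofReal_one]; exact ENNReal.ofReal_le_ofReal hp
  haveI hfin : IsFiniteMeasure μ :=
    ⟨by simpa [hμ, Measure.restrict_apply_univ] using hΩfin⟩
  -- tail identity
  have tail_eq : ∀ (j : ℕ) (t : ℝ),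
      ∫⁻ x in Ω ∩ {x | t < ‖f j x‖}, ENNReal.ofReal (‖f j x‖ ^ p)
        = eLpNorm (f j) P (volume.restrict (Ω ∩ {x | t < ‖f j x‖})) ^ p := by
    intro j t
    rw [eLpNorm_eq_lintegral_rpow_enorm_toReal hP0 hPtop, hPr, ← ENNReal.rpow_mul,
      one_div_mul_cancel hp0.ne', ENNReal.rpow_one]
    refine lintegral_congr fun x => ?_
    rw [← ofReal_norm, ENNReal.ofReal_rpow_of_nonneg (norm_nonneg _) hp0.le]
  constructor
  · -- equiintegrable → approximation
    intro H ε hε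
    have hε2 : (0:ℝ) < ε ^ p / 2 := by positivity
    obtain ⟨t₀, ht₀⟩ := H (ε ^ p / 2) hε2
    set t := max t₀ 0 with htdef
    have ht0 : (0:ℝ) ≤ t := le_max_right _ _
    have ht : ∀ j, ∫⁻ x in Ω ∩ {x | t < ‖f j x‖}, ENNReal.ofReal (‖f j x‖ ^ p)
        ≤ ENNReal.ofReal (ε ^ p / 2) := by
      intro j
      refine le_trans (lintegral_mono_set ?_) (ht₀ j)
      rintro x ⟨hx1, hx2⟩
      simp only [Set.mem_inter_iff, Set.mem_setOf_eq] at hx2 ⊢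
      exact ⟨hx1, lt_of_le_of_lt (le_max_left t₀ 0) hx2⟩
    refine ⟨fun j x => if ‖f j x‖ ≤ t then f j x else 0,
      max 1 (volume Ω ^ q.toReal⁻¹ * ENNReal.ofReal t),
      lt_of_lt_of_le one_pos (le_max_left _ _),
      max_lt one_lt_top
        (ENNReal.mul_lt_top (ENNReal.rpow_lt_top_of_nonneg (by positivity) hΩfin.ne)
          ENNReal.ofReal_lt_top),
      fun j => ?_⟩
    set g : EuclideanSpace ℝ (Fin n) → EuclideanSpace ℝ (Fin m) :=
      fun x => if ‖f j x‖ ≤ t then f j x else 0 with hg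
    have hbound : ∀ x, ‖g x‖ ≤ t := by
      intro x
      by_cases hx : ‖f j x‖ ≤ t
      · simp [hg, hx]
      · simp [hg, hx, ht0]
    have hgm : AEStronglyMeasurable g μ := by
      obtain ⟨f', hf'm, hff'⟩ := (hf j).1
      refine ⟨fun x => if ‖f' x‖ ≤ t then f' x else 0, ?_, ?_⟩
      · have : (fun x => if ‖f' x‖ ≤ t then f' x else 0)
            = Set.indicator {x | ‖f' x‖ ≤ t} f' := by
          funext x
          by_cases hx : ‖f' x‖ ≤ t <;> simp [Set.indicator_apply, hx]
        rw [this]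
        exact hf'm.indicator (measurableSet_le hf'm.norm.measurable measurable_const)
      · filter_upwards [hff'] with x hx
        simp only [hg, hx]
    have hgtop : MemLp g ⊤ μ :=
      memLp_top_of_bound hgm t (Filter.Eventually.of_forall hbound)
    refine ⟨hgtop.mono_exponent le_top, ?_, ?_⟩
    · -- eLpNorm (f j - g) < ofReal ε
      set S := {x | t < ‖f j x‖} with hS
      have hnm : NullMeasurableSet S μ :=
        nullMeasurableSet_lt aemeasurable_const (hf j).1.norm.aemeasurable
      have key : eLpNorm (f j - g) P μ ^ p
          = ∫⁻ x in Ω ∩ S, ENNReal.ofReal (‖f j x‖ ^ p) := by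
        rw [eLpNorm_eq_lintegral_rpow_enorm_toReal hP0 hPtop, hPr, ← ENNReal.rpow_mul,
          one_div_mul_cancel hp0.ne', ENNReal.rpow_one]
        have h1 : ∀ x, ‖(f j - g) x‖ₑ ^ p
            = S.indicator (fun x => ENNReal.ofReal (‖f j x‖ ^ p)) x := by
          intro x
          by_cases hx : ‖f j x‖ ≤ t
          · have hxS : x ∉ S := by simp [hS, not_lt.mpr hx]
            simp [Set.indicator_of_notMem hxS, Pi.sub_apply, hg, hx,
              ENNReal.zero_rpow_of_pos hp0]
          · have hxS : x ∈ S := not_le.mp hx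
            simp only [Set.indicator_of_mem hxS, Pi.sub_apply, hg, if_neg hx, sub_zero]
            rw [← ofReal_norm,
              ENNReal.ofReal_rpow_of_nonneg (norm_nonneg _) hp0.le]
        calc ∫⁻ x, ‖(f j - g) x‖ₑ ^ p ∂μ
            = ∫⁻ x, S.indicator (fun x => ENNReal.ofReal (‖f j x‖ ^ p)) x ∂μ :=
              lintegral_congr h1
          _ = ∫⁻ x in S, ENNReal.ofReal (‖f j x‖ ^ p) ∂μ := lintegral_indicator₀ hnm _
          _ = ∫⁻ x in Ω ∩ S, ENNReal.ofReal (‖f j x‖ ^ p) := by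
              rw [hμ, Measure.restrict_restrict₀ hnm, Set.inter_comm]
      have hlt : eLpNorm (f j - g) P μ ^ p < (ENNReal.ofReal ε) ^ p := by
        rw [key, ENNReal.ofReal_rpow_of_nonneg hε.le hp0.le]
        refine lt_of_le_of_lt (ht j) ?_
        exact (ENNReal.ofReal_lt_ofReal_iff (by positivity)).mpr (by linarith)
      exact (ENNReal.rpow_lt_rpow_iff hp0).mp hlt
    · -- L^q bound
      refine le_trans (eLpNorm_le_of_ae_bound (Filter.Eventually.of_forall hbound)) ?_
      rw [hμ, Measure.restrict_apply_univ]
      exact le_max_right _ _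
  · -- approximation → equiintegrable
    intro H ε hε
    set B := ENNReal.ofReal ε ^ (1/p : ℝ) with hBdef
    have hB0 : B ≠ 0 :=
      (ENNReal.rpow_pos (ENNReal.ofReal_pos.mpr hε) ENNReal.ofReal_ne_top).ne'
    have hBtop : B ≠ ⊤ :=
      ENNReal.rpow_ne_top_of_nonneg (by positivity) ENNReal.ofReal_ne_top
    have hB2 : B / 2 ≠ 0 := by
      simp [ENNReal.div_eq_zero_iff, hB0]
    have hB2top : B / 2 ≠ ⊤ := (ENNReal.div_lt_top hBtop two_ne_zero).ne
    have hB2pos : (0:ℝ) < (B / 2).toReal :=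
      ENNReal.toReal_pos hB2 hB2top
    obtain ⟨g, c, hc0, hctop, hg⟩ := H ((B / 2).toReal) hB2pos
    have hB2eq : ENNReal.ofReal ((B / 2).toReal) = B / 2 := ENNReal.ofReal_toReal hB2top
    -- exponent r
    set r := 1 / p - 1 / q.toReal with hrdef
    have hr : 0 < r := by
      rcases eq_or_ne q ⊤ with hq | hq
      · rw [hrdef, hq]
        simp only [ENNReal.toReal_top, _root_.div_zero, sub_zero]
        positivity
      · have hq' : p < q.toReal := by
          have := (ENNReal.toReal_lt_toReal ENNReal.ofReal_ne_top hq).mpr hpq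
          rwa [ENNReal.toReal_ofReal hp0.le] at this
        have h3 : 1 / q.toReal < 1 / p := one_div_lt_one_div_of_lt hp0 hq'
        rw [hrdef]; linarith
    -- constants
    set D := (B / 2) / c with hDdef
    have hD0 : D ≠ 0 := by
      simp [hDdef, ENNReal.div_eq_zero_iff, hB2, hctop.ne]
    have hDtop : D ≠ ⊤ := (ENNReal.div_lt_top hB2top hc0.ne').ne
    set K := D ^ (1/r : ℝ) with hKdef
    have hK0 : K ≠ 0 := (ENNReal.rpow_pos (pos_iff_ne_zero.mpr hD0) hDtop).ne'
    have hKtop : K ≠ ⊤ := ENNReal.rpow_ne_top_of_nonneg (by positivity) hDtop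
    have hCpK : C ^ p / K ≠ ⊤ :=
      (ENNReal.div_lt_top (ENNReal.rpow_lt_top_of_nonneg hp0.le hCtop.ne).ne hK0).ne
    set t := ((C ^ p / K) ^ (1/p : ℝ)).toReal + 1 with htdef
    have htpos : (0:ℝ) < t := by positivity
    have h_t : (C ^ p / K) ^ (1/p : ℝ) < ENNReal.ofReal t := by
      rw [ENNReal.lt_ofReal_iff_toReal_lt
        (ENNReal.rpow_ne_top_of_nonneg (by positivity) hCpK)]
      exact lt_add_one _
    have h_t' : C ^ p / K < ENNReal.ofReal t ^ p := by
      have := ENNReal.rpow_lt_rpow h_t hp0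
      rwa [← ENNReal.rpow_mul, one_div_mul_cancel hp0.ne', ENNReal.rpow_one] at this
    refine ⟨t, fun j => ?_⟩
    obtain ⟨hgq, hfg, hgc⟩ := hg j
    set S := {x | t < ‖f j x‖} with hS
    set ν := volume.restrict (Ω ∩ S) with hν
    have hνμ : ν ≤ μ := Measure.restrict_mono Set.inter_subset_left le_rfl
    have hgm : AEStronglyMeasurable (g j) μ := hgq.1
    have hfgm : AEStronglyMeasurable (f j - g j) μ := (hf j).1.sub hgm
    -- Chebyshev
    have hcheb : μ S ≤ C ^ p / ENNReal.ofReal t ^ p := by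
      have h1 : μ S ≤ μ {x | ENNReal.ofReal t ≤ ‖f j x‖ₑ} := by
        refine measure_mono fun x hx => ?_
        rw [Set.mem_setOf_eq, ← ofReal_norm]
        exact ENNReal.ofReal_le_ofReal (le_of_lt hx)
      have h2 := meas_ge_le_mul_pow_eLpNorm_enorm μ hP0 hPtop (hf j).1
        (ENNReal.ofReal_pos.mpr htpos).ne' (fun h => absurd h ENNReal.ofReal_ne_top)
      rw [hPr] at h2
      refine h1.trans (h2.trans ?_)
      rw [ENNReal.div_eq_inv_mul, ENNReal.inv_rpow]
      exact mul_le_mul_right (ENNReal.rpow_le_rpow (hC j) hp0.le) _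
    have hνuniv : ν Set.univ ≤ K := by
      have h1 : ν Set.univ = μ S := by
        rw [hν, Measure.restrict_apply_univ, hμ, Measure.restrict_apply' hΩ,
          Set.inter_comm]
      rw [h1]
      refine hcheb.trans ?_
      rw [ENNReal.div_le_iff
        (ENNReal.rpow_pos (ENNReal.ofReal_pos.mpr htpos) ENNReal.ofReal_ne_top).ne'
        (ENNReal.rpow_ne_top_of_nonneg hp0.le ENNReal.ofReal_ne_top)]
      calc C ^ p = (C ^ p / K) * K := (ENNReal.div_mul_cancel hK0 hKtop).symm
        _ ≤ ENNReal.ofReal t ^ p * K := mul_le_mul_left h_t'.le _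
        _ = K * ENNReal.ofReal t ^ p := mul_comm _ _
    -- main estimate
    have step1 : eLpNorm (f j) P ν ≤ eLpNorm (f j - g j) P ν + eLpNorm (g j) P ν := by
      have hsub : f j = (f j - g j) + g j := by
        funext x; simp
      nth_rewrite 1 [hsub]
      exact eLpNorm_add_le (hfgm.mono_measure hνμ) (hgm.mono_measure hνμ) hP1
    have step2 : eLpNorm (f j - g j) P ν ≤ B / 2 := by
      refine (eLpNorm_mono_measure _ hνμ).trans ?_
      rw [← hB2eq]
      exact hfg.le
    have step3 : eLpNorm (g j) P ν ≤ B / 2 := by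
      have h1 : eLpNorm (g j) P ν ≤ eLpNorm (g j) q ν * ν Set.univ ^ r := by
        have := eLpNorm_le_eLpNorm_mul_rpow_measure_univ hpq.le (hgm.mono_measure hνμ)
        rwa [hPr] at this
      refine h1.trans ?_
      have h2 : eLpNorm (g j) q ν ≤ c := (eLpNorm_mono_measure _ hνμ).trans hgc
      have h3 : ν Set.univ ^ r ≤ D := by
        calc ν Set.univ ^ r ≤ K ^ r := ENNReal.rpow_le_rpow hνuniv hr.le
          _ = D := by
            rw [hKdef, ← ENNReal.rpow_mul, one_div_mul_cancel hr.ne', ENNReal.rpow_one]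
      calc eLpNorm (g j) q ν * ν Set.univ ^ r ≤ c * D := mul_le_mul' h2 h3
        _ = B / 2 := by
          rw [hDdef, mul_comm, ENNReal.div_mul_cancel hc0.ne' hctop.ne]
    have hmain : eLpNorm (f j) P ν ≤ B := by
      refine step1.trans ?_
      calc eLpNorm (f j - g j) P ν + eLpNorm (g j) P ν ≤ B / 2 + B / 2 :=
            add_le_add step2 step3
        _ = B := ENNReal.add_halves B
    rw [tail_eq j t]
    calc eLpNorm (f j) P (volume.restrict (Ω ∩ S)) ^ p ≤ B ^ p :=
          ENNReal.rpow_le_rpow hmain hp0.le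
      _ = ENNReal.ofReal ε := by
          rw [hBdef, ← ENNReal.rpow_mul, one_div_mul_cancel hp0.ne', ENNReal.rpow_one]
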